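/- arXiv:math/0503211 — 2 statements merged into one kernel-verified Lean document; each statement's English description precedes it below -/
import Mathlib

section
/- Let m be a finite measure on a measurable space T and let 0 < α ≤ 1. Then the kernel K(U,V) = m(U)^α + m(V)^α − m(U △ V)^α, defined on measurable sets of finite measure, is positive semidefinite: for any finite family of measurable sets U₁,…,Uₙ and reals u₁,…,uₙ, ∑_{i,j} K(Uᵢ,Uⱼ) uᵢ uⱼ ≥ 0. -/
open MeasureTheory Set

section Aux

variable {T : Type*} [MeasurableSpace T]

lemma symmDiff_measure_toReal (μ : Measure T) [IsFiniteMeasure μ]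
    {A B : Set T} (hA : MeasurableSet A) (hB : MeasurableSet B) :
    (μ (symmDiff A B)).toReal
      = (μ A).toReal + (μ B).toReal - 2 * (μ (A ∩ B)).toReal := by
  have h1 : μ (A \ B) + μ (A ∩ B) = μ A := measure_diff_add_inter A hB
  have h2 : μ (B \ A) + μ (B ∩ A) = μ B := measure_diff_add_inter B hA
  have h3 : μ (symmDiff A B) = μ (A \ B) + μ (B \ A) :=
    measure_symmDiff_eq hA.nullMeasurableSet hB.nullMeasurableSet
  have fin : ∀ s : Set T, μ s ≠ ⊤ := fun s => measure_ne_top μ s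
  have e1 := congrArg ENNReal.toReal h1
  have e2 := congrArg ENNReal.toReal h2
  have e3 := congrArg ENNReal.toReal h3
  rw [ENNReal.toReal_add (fin _) (fin _)] at e1 e2 e3
  rw [Set.inter_comm B A] at e2
  linarith

lemma inter_kernel_psd (μ : Measure T) [IsFiniteMeasure μ]
    {ι : Type*} [Fintype ι] (A : ι → Set T) (hA : ∀ i, MeasurableSet (A i)) (v : ι → ℝ) :
    0 ≤ ∑ i, ∑ j, (μ (A i ∩ A j)).toReal * v i * v j := by
  set f : ι → T → ℝ := fun i => (A i).indicator (fun _ => v i) with hf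
  have hprod : ∀ i j, (fun x => f i x * f j x)
      = (A i ∩ A j).indicator (fun _ => v i * v j) := by
    intro i j
    ext x
    by_cases hx : x ∈ A i <;> by_cases hy : x ∈ A j <;>
      simp [hf, Set.indicator_apply, hx, hy]
  have hpint : ∀ i j, Integrable (fun x => f i x * f j x) μ := by
    intro i j
    rw [hprod]
    exact (integrable_const _).indicator ((hA i).inter (hA j))
  have key : ∀ i j, (μ (A i ∩ A j)).toReal * v i * v j
      = ∫ x, f i x * f j x ∂μ := by
    intro i j
    rw [hprod, integral_indicator_const _ ((hA i).inter (hA j))]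
    simp [mul_assoc, measureReal_def]
  calc (0:ℝ) ≤ ∫ x, (∑ i, f i x)^2 ∂μ := integral_nonneg (fun x => sq_nonneg _)
  _ = ∑ i, ∑ j, (μ (A i ∩ A j)).toReal * v i * v j := by
      simp_rw [sq, Finset.sum_mul_sum]
      rw [integral_finset_sum _ (fun i _ => integrable_finset_sum _ (fun j _ => hpint i j))]
      exact Finset.sum_congr rfl fun i _ => by
        rw [integral_finset_sum _ (fun j _ => hpint i j)]
        exact Finset.sum_congr rfl fun j _ => (key i j).symm

lemma inter_pow_kernel_psd (μ : Measure T) [IsFiniteMeasure μ]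
    {ι : Type*} [Fintype ι] (A : ι → Set T) (hA : ∀ i, MeasurableSet (A i)) (v : ι → ℝ) (k : ℕ) :
    0 ≤ ∑ i, ∑ j, (μ (A i ∩ A j)).toReal ^ k * v i * v j := by
  have h := inter_kernel_psd (Measure.pi (fun _ : Fin k => μ))
    (fun i => Set.univ.pi fun _ => A i) (fun i => MeasurableSet.univ_pi fun _ => hA i) v
  have key : ∀ i j, ((Measure.pi (fun _ : Fin k => μ))
      ((Set.univ.pi fun _ => A i) ∩ (Set.univ.pi fun _ => A j))).toReal
      = (μ (A i ∩ A j)).toReal ^ k := by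
    intro i j
    rw [← Set.pi_inter_distrib, Measure.pi_pi]
    simp [ENNReal.toReal_pow]
  simp_rw [key] at h
  exact h

lemma real_exp_tsum (x : ℝ) : Real.exp x = ∑' k : ℕ, x ^ k / (Nat.factorial k : ℝ) := by
  rw [Real.exp_eq_exp_ℝ, NormedSpace.exp_eq_tsum_div]

lemma exp_kernel_psd (μ : Measure T) [IsFiniteMeasure μ]
    {ι : Type*} [Fintype ι] (A : ι → Set T) (hA : ∀ i, MeasurableSet (A i)) (v : ι → ℝ)
    {c : ℝ} (hc : 0 ≤ c) :
    0 ≤ ∑ i, ∑ j, Real.exp (-(c * (μ (symmDiff (A i) (A j))).toReal)) * v i * v j := by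
  set a : ι → ℝ := fun i => (μ (A i)).toReal with ha
  set b : ι → ι → ℝ := fun i j => (μ (A i ∩ A j)).toReal with hb
  set w : ι → ℝ := fun i => Real.exp (-(c * a i)) * v i with hw
  have hd : ∀ i j, (μ (symmDiff (A i) (A j))).toReal = a i + a j - 2 * b i j :=
    fun i j => symmDiff_measure_toReal μ (hA i) (hA j)
  have hterm : ∀ i j, Real.exp (-(c * (μ (symmDiff (A i) (A j))).toReal)) * v i * v j
      = ∑' k : ℕ, ((2*c)^k / (Nat.factorial k : ℝ)) * (b i j ^ k * w i * w j) := by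
    intro i j
    have h2 : Real.exp (-(c * (μ (symmDiff (A i) (A j))).toReal)) * v i * v j
        = Real.exp (2*c*b i j) * (w i * w j) := by
      rw [hd i j, show -(c * (a i + a j - 2 * b i j)) = 2*c*b i j + (-(c*a i) + -(c*a j)) by ring,
        Real.exp_add, Real.exp_add]
      simp only [hw]
      ring
    rw [h2, real_exp_tsum, ← tsum_mul_right]
    congr 1; ext k
    rw [mul_pow]; ring
  have hsummable : ∀ i j : ι,
      Summable (fun k : ℕ => ((2*c)^k / (Nat.factorial k : ℝ)) * (b i j ^ k * w i * w j)) := by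
    intro i j
    have : (fun k : ℕ => ((2*c)^k / (Nat.factorial k : ℝ)) * (b i j ^ k * w i * w j))
        = fun k : ℕ => ((2*c*b i j)^k / (Nat.factorial k : ℝ)) * (w i * w j) := by
      ext k; rw [mul_pow]; ring
    rw [this]
    exact (Real.summable_pow_div_factorial _).mul_right _
  calc (0:ℝ) ≤ ∑' k : ℕ, ∑ i, ∑ j, ((2*c)^k / (Nat.factorial k : ℝ)) * (b i j ^ k * w i * w j) := by
        refine tsum_nonneg fun k => ?_
        have h0 : 0 ≤ (2*c)^k / (Nat.factorial k : ℝ) := by positivity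
        have h1 := inter_pow_kernel_psd μ A hA w k
        calc (0:ℝ) ≤ ((2*c)^k / (Nat.factorial k : ℝ)) * ∑ i, ∑ j, b i j ^ k * w i * w j :=
              mul_nonneg h0 h1
        _ = ∑ i, ∑ j, ((2*c)^k / (Nat.factorial k : ℝ)) * (b i j ^ k * w i * w j) := by
              rw [Finset.mul_sum]; exact Finset.sum_congr rfl fun i _ => by rw [Finset.mul_sum]
  _ = ∑ i, ∑ j, Real.exp (-(c * (μ (symmDiff (A i) (A j))).toReal)) * v i * v j := by
        rw [Summable.tsum_finsetSum (fun i _ => summable_sum (fun j _ => hsummable i j))]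
        refine Finset.sum_congr rfl fun i _ => ?_
        rw [Summable.tsum_finsetSum (fun j _ => hsummable i j)]
        exact Finset.sum_congr rfl fun j _ => (hterm i j).symm

lemma lambda_kernel_psd (m : Measure T) [IsFiniteMeasure m]
    {n : ℕ} (U : Fin n → Set T) (hU : ∀ i, MeasurableSet (U i)) (u : Fin n → ℝ)
    {c : ℝ} (hc : 0 ≤ c) :
    0 ≤ ∑ i, ∑ j,
      (Real.exp (-(c * (m (symmDiff (U i) (U j))).toReal))
        - Real.exp (-(c * (m (U i)).toReal)) - Real.exp (-(c * (m (U j)).toReal)) + 1)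
        * u i * u j := by
  set x : Fin n → ℝ := fun i => Real.exp (-(c * (m (U i)).toReal)) with hx
  set B : Option (Fin n) → Set T := fun p => p.elim ∅ U with hB
  set v : Option (Fin n) → ℝ := fun p => p.elim (-∑ i, u i) u with hv
  have hBm : ∀ p, MeasurableSet (B p) := by
    rintro (_ | i)
    · exact MeasurableSet.empty
    · exact hU i
  have h := exp_kernel_psd m B hBm v hc
  rw [Fintype.sum_option] at h
  simp only [Fintype.sum_option] at h
  have hsymm1 : ∀ s : Set T, symmDiff ∅ s = s := fun s => by
    rw [show (∅:Set T) = ⊥ from rfl, bot_symmDiff]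
  have hsymm2 : ∀ s : Set T, symmDiff s ∅ = s := fun s => by
    rw [show (∅:Set T) = ⊥ from rfl, symmDiff_bot]
  simp only [hB, hv, Option.elim, symmDiff_self, Set.bot_eq_empty, measure_empty,
    ENNReal.toReal_zero, mul_zero, neg_zero, Real.exp_zero, one_mul,
    hsymm1, hsymm2] at h
  set S1 := ∑ i, u i with hS1
  set S2 := ∑ i, x i * u i with hS2
  set Q := ∑ i, ∑ j, Real.exp (-(c * (m (symmDiff (U i) (U j))).toReal)) * u i * u j with hQ
  have e1 : (∑ j, x j * (-S1) * u j) = -(S1 * S2) := by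
    rw [Finset.sum_congr rfl fun j (_ : j ∈ Finset.univ) =>
      (show x j * (-S1) * u j = -(S1 * (x j * u j)) by ring),
      Finset.sum_neg_distrib, ← Finset.mul_sum, hS2]
  have e2 : (∑ i, x i * u i * (-S1)) = -(S1 * S2) := by
    rw [Finset.sum_congr rfl fun j (_ : j ∈ Finset.univ) =>
      (show x j * u j * (-S1) = -(S1 * (x j * u j)) by ring),
      Finset.sum_neg_distrib, ← Finset.mul_sum, hS2]
  rw [e1, Finset.sum_add_distrib, e2] at h
  have Teq : (∑ i, ∑ j,
      (Real.exp (-(c * (m (symmDiff (U i) (U j))).toReal)) - x i - x j + 1) * u i * u j)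
      = Q - S1 * S2 - S1 * S2 + S1 * S1 := by
    have inner : ∀ i, (∑ j,
        (Real.exp (-(c * (m (symmDiff (U i) (U j))).toReal)) - x i - x j + 1) * u i * u j)
        = (∑ j, Real.exp (-(c * (m (symmDiff (U i) (U j))).toReal)) * u i * u j)
          - x i * u i * S1 - u i * S2 + u i * S1 := by
      intro i
      rw [hS1, hS2, Finset.mul_sum, Finset.mul_sum, Finset.mul_sum,
        ← Finset.sum_sub_distrib, ← Finset.sum_sub_distrib, ← Finset.sum_add_distrib]
      exact Finset.sum_congr rfl fun j _ => by ring
    rw [Finset.sum_congr rfl fun i _ => inner i]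
    rw [Finset.sum_add_distrib, Finset.sum_sub_distrib, Finset.sum_sub_distrib]
    rw [← Finset.sum_mul, ← Finset.sum_mul, ← Finset.sum_mul, ← hQ, ← hS2, ← hS1]
    ring
  rw [Teq]
  nlinarith [h]

end Aux

section Integral

open Real

lemma g_cont {α x : ℝ} :
    ContinuousOn (fun t : ℝ => (1 - Real.exp (-(x * t))) * t ^ (-1 - α)) (Ioi 0) := by
  refine ContinuousOn.mul ?_ (continuousOn_id.rpow_const fun t ht => Or.inl (ne_of_gt ht))
  exact (continuous_const.sub ((continuous_const.mul continuous_id).neg.rexp)).continuousOn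

lemma g_int {α : ℝ} (hα0 : 0 < α) (hα1 : α < 1) {x : ℝ} (hx : 0 ≤ x) :
    IntegrableOn (fun t : ℝ => (1 - Real.exp (-(x * t))) * t ^ (-1 - α)) (Set.Ioi 0) := by
  rw [← Ioc_union_Ioi_eq_Ioi (zero_le_one : (0:ℝ) ≤ 1), integrableOn_union]
  constructor
  · have hbound : IntegrableOn (fun t : ℝ => x * t ^ (-α)) (Ioc 0 1) := by
      exact Integrable.const_mul
        ((intervalIntegrable_iff_integrableOn_Ioc_of_le zero_le_one).mp
          (intervalIntegral.intervalIntegrable_rpow' (by linarith))) x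
    refine Integrable.mono' hbound (g_cont.aestronglyMeasurable measurableSet_Ioi |>.mono_measure
      (Measure.restrict_mono Ioc_subset_Ioi_self le_rfl)) ?_
    refine (ae_restrict_iff' measurableSet_Ioc).mpr (Filter.Eventually.of_forall fun t ht => ?_)
    have ht0 : 0 < t := ht.1
    have h1 : 0 ≤ 1 - Real.exp (-(x * t)) := by
      have : Real.exp (-(x*t)) ≤ 1 := Real.exp_le_one_iff.mpr (by nlinarith)
      linarith
    have h2 : 1 - Real.exp (-(x * t)) ≤ x * t := by
      have := Real.add_one_le_exp (-(x*t))
      linarith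
    rw [Real.norm_eq_abs, abs_of_nonneg (mul_nonneg h1 (Real.rpow_nonneg ht0.le _))]
    calc (1 - Real.exp (-(x * t))) * t ^ (-1 - α) ≤ (x * t) * t ^ (-1 - α) := by
          exact mul_le_mul_of_nonneg_right h2 (Real.rpow_nonneg ht0.le _)
    _ = x * t ^ (-α) := by
          rw [show (-1 - α : ℝ) = -1 + -α by ring, Real.rpow_add ht0, Real.rpow_neg_one]
          field_simp
  · have hbound : IntegrableOn (fun t : ℝ => t ^ (-1 - α)) (Ioi 1) :=
      integrableOn_Ioi_rpow_of_lt (by linarith) one_pos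
    refine Integrable.mono' hbound (g_cont.aestronglyMeasurable measurableSet_Ioi |>.mono_measure
      (Measure.restrict_mono (Ioi_subset_Ioi zero_le_one) le_rfl)) ?_
    refine (ae_restrict_iff' measurableSet_Ioi).mpr (Filter.Eventually.of_forall fun t ht => ?_)
    have ht0 : (0:ℝ) < t := lt_trans one_pos ht
    have h1 : 0 ≤ 1 - Real.exp (-(x * t)) := by
      have : Real.exp (-(x*t)) ≤ 1 := Real.exp_le_one_iff.mpr (by nlinarith)
      linarith
    have h2 : 1 - Real.exp (-(x * t)) ≤ 1 := by
      have := Real.exp_pos (-(x*t))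
      linarith
    rw [Real.norm_eq_abs, abs_of_nonneg (mul_nonneg h1 (Real.rpow_nonneg ht0.le _))]
    calc (1 - Real.exp (-(x * t))) * t ^ (-1 - α) ≤ 1 * t ^ (-1 - α) :=
          mul_le_mul_of_nonneg_right h2 (Real.rpow_nonneg ht0.le _)
    _ = t ^ (-1 - α) := one_mul _

lemma g_repr {α : ℝ} (hα0 : 0 < α) {x : ℝ} (hx : 0 ≤ x) :
    ∫ t in Ioi (0:ℝ), (1 - Real.exp (-(x * t))) * t ^ (-1 - α)
      = (∫ t in Ioi (0:ℝ), (1 - Real.exp (-t)) * t ^ (-1 - α)) * x ^ α := by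
  rcases eq_or_lt_of_le hx with h | h
  · simp [← h, Real.zero_rpow hα0.ne']
  · have key := integral_comp_mul_left_Ioi
      (fun t : ℝ => (1 - Real.exp (-t)) * t ^ (-1 - α)) 0 h
    rw [mul_zero] at key
    have heq : ∀ t ∈ Ioi (0:ℝ),
        (1 - Real.exp (-(x * t))) * t ^ (-1 - α)
          = x ^ (1 + α) * ((1 - Real.exp (-(x * t))) * (x * t) ^ (-1 - α)) := by
      intro t ht
      rw [Real.mul_rpow h.le (le_of_lt ht)]
      rw [show (-1 - α : ℝ) = -(1 + α) by ring, Real.rpow_neg h.le]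
      rw [show x ^ (1+α) * ((1 - Real.exp (-(x * t))) * ((x ^ (1+α))⁻¹ * t ^ (-(1+α))))
        = (x ^ (1+α) * (x ^ (1+α))⁻¹) * ((1 - Real.exp (-(x * t))) * t ^ (-(1+α))) by ring]
      rw [mul_inv_cancel₀ (ne_of_gt (Real.rpow_pos_of_pos h _)), one_mul]
    rw [setIntegral_congr_fun measurableSet_Ioi heq, integral_const_mul, key, smul_eq_mul]
    rw [show x ^ (1+α) * (x⁻¹ * ∫ t in Ioi (0:ℝ), (1 - Real.exp (-t)) * t ^ (-1-α))
      = (x ^ (1+α) * x⁻¹) * ∫ t in Ioi (0:ℝ), (1 - Real.exp (-t)) * t ^ (-1-α) by ring]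
    rw [← Real.rpow_neg_one x, ← Real.rpow_add h, show (1:ℝ) + α + -1 = α by ring]
    ring

lemma C_pos {α : ℝ} (hα0 : 0 < α) (hα1 : α < 1) :
    0 < ∫ t in Ioi (0:ℝ), (1 - Real.exp (-t)) * t ^ (-1 - α) := by
  have hint : IntegrableOn (fun t : ℝ => (1 - Real.exp (-t)) * t ^ (-1 - α)) (Ioi 0) := by
    have := g_int hα0 hα1 (zero_le_one)
    simpa using this
  rw [setIntegral_pos_iff_support_of_nonneg_ae ?_ hint]
  · have hsupp : (Function.support fun t : ℝ => (1 - Real.exp (-t)) * t ^ (-1 - α)) ∩ Ioi 0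
        = Ioi 0 := by
      rw [inter_eq_right]
      intro t ht
      rw [Function.mem_support]
      have h1 : 0 < 1 - Real.exp (-t) := by
        have : Real.exp (-t) < 1 := Real.exp_lt_one_iff.mpr (by simpa using ht)
        linarith
      exact mul_ne_zero (ne_of_gt h1) (ne_of_gt (Real.rpow_pos_of_pos ht _))
    rw [hsupp, volume_Ioi]
    exact ENNReal.zero_lt_top
  · refine Filter.eventually_of_mem (self_mem_ae_restrict measurableSet_Ioi) fun t ht => ?_
    have h1 : Real.exp (-t) ≤ 1 := Real.exp_le_one_iff.mpr (by simpa using le_of_lt ht)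
    exact mul_nonneg (by linarith) (Real.rpow_nonneg (le_of_lt ht) _)

lemma g_int' {α : ℝ} (hα0 : 0 < α) (hα1 : α < 1) {x : ℝ} (hx : 0 ≤ x) :
    IntegrableOn (fun t : ℝ => (1 - Real.exp (-(t * x))) * t ^ (-1 - α)) (Set.Ioi 0) := by
  have h := g_int hα0 hα1 hx
  have he : (fun t : ℝ => (1 - Real.exp (-(t * x))) * t ^ (-1-α))
      = fun t => (1 - Real.exp (-(x * t))) * t ^ (-1-α) := by
    funext t; rw [mul_comm t x]
  rw [he]; exact h

lemma g_repr' {α : ℝ} (hα0 : 0 < α) {x : ℝ} (hx : 0 ≤ x) :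
    ∫ t in Ioi (0:ℝ), (1 - Real.exp (-(t * x))) * t ^ (-1 - α)
      = (∫ t in Ioi (0:ℝ), (1 - Real.exp (-t)) * t ^ (-1 - α)) * x ^ α := by
  have he : (fun t : ℝ => (1 - Real.exp (-(t * x))) * t ^ (-1-α))
      = fun t => (1 - Real.exp (-(x * t))) * t ^ (-1-α) := by
    funext t; rw [mul_comm t x]
  rw [he, g_repr hα0 hx]

end Integral

theorem kernel_posSemidef
    {T : Type*} [MeasurableSpace T] (m : Measure T) [IsFiniteMeasure m]
    (α : ℝ) (hα0 : 0 < α) (hα1 : α ≤ 1)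
    (n : ℕ) (U : Fin n → Set T) (hU : ∀ i, MeasurableSet (U i))
    (u : Fin n → ℝ) :
    0 ≤ ∑ i, ∑ j,
      ((m (U i)).toReal ^ α + (m (U j)).toReal ^ α
        - (m (symmDiff (U i) (U j))).toReal ^ α) * u i * u j := by
  rcases eq_or_lt_of_le hα1 with rfl | hlt
  · -- α = 1
    simp only [Real.rpow_one]
    have key : ∀ i j, ((m (U i)).toReal + (m (U j)).toReal
        - (m (symmDiff (U i) (U j))).toReal) * u i * u j
        = 2 * ((m (U i ∩ U j)).toReal * u i * u j) := by
      intro i j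
      rw [symmDiff_measure_toReal m (hU i) (hU j)]
      ring
    calc (0:ℝ) ≤ 2 * ∑ i, ∑ j, (m (U i ∩ U j)).toReal * u i * u j :=
          mul_nonneg (by norm_num) (inter_kernel_psd m U hU u)
    _ = ∑ i, ∑ j, ((m (U i)).toReal + (m (U j)).toReal
          - (m (symmDiff (U i) (U j))).toReal) * u i * u j := by
        rw [Finset.mul_sum]
        refine Finset.sum_congr rfl fun i _ => ?_
        rw [Finset.mul_sum]
        exact Finset.sum_congr rfl fun j _ => (key i j).symm
  · -- α < 1
    set C := ∫ t in Ioi (0:ℝ), (1 - Real.exp (-t)) * t ^ (-1 - α) with hC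
    have hCpos : 0 < C := C_pos hα0 hlt
    set a : Fin n → ℝ := fun i => (m (U i)).toReal with ha
    set d : Fin n → Fin n → ℝ := fun i j => (m (symmDiff (U i) (U j))).toReal with hd
    have hann : ∀ i, 0 ≤ a i := fun i => ENNReal.toReal_nonneg
    have hdnn : ∀ i j, 0 ≤ d i j := fun i j => ENNReal.toReal_nonneg
    set F : Fin n → Fin n → ℝ → ℝ := fun i j t =>
      ((1 - Real.exp (-(t * a i))) * t ^ (-1 - α)
        + (1 - Real.exp (-(t * a j))) * t ^ (-1 - α)
        - (1 - Real.exp (-(t * d i j))) * t ^ (-1 - α)) * (u i * u j) with hF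
    have hFint : ∀ i j, IntegrableOn (F i j) (Ioi 0) := by
      intro i j
      exact (((g_int' hα0 hlt (hann i)).add (g_int' hα0 hlt (hann j))).sub
        (g_int' hα0 hlt (hdnn i j))).mul_const _
    have hCK : ∀ i j, C * ((a i ^ α + a j ^ α - d i j ^ α) * u i * u j)
        = ∫ t in Ioi (0:ℝ), F i j t := by
      intro i j
      simp only [hF]
      have hg1 := g_int' hα0 hlt (hann i)
      have hg2 := g_int' hα0 hlt (hann j)
      have hg3 := g_int' hα0 hlt (hdnn i j)
      have hij : IntegrableOn (fun t : ℝ => (1 - Real.exp (-(t * a i))) * t ^ (-1-α)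
          + (1 - Real.exp (-(t * a j))) * t ^ (-1-α)) (Ioi 0) := hg1.add hg2
      rw [integral_mul_const, integral_sub hij hg3, integral_add hg1 hg2,
        g_repr' hα0 (hann i), g_repr' hα0 (hann j), g_repr' hα0 (hdnn i j)]
      ring
    have hmain : 0 ≤ C * ∑ i, ∑ j, ((a i)^α + (a j)^α - d i j ^ α) * u i * u j := by
      have hsum : C * ∑ i, ∑ j, ((a i)^α + (a j)^α - d i j ^ α) * u i * u j
          = ∫ t in Ioi (0:ℝ), (∑ i, ∑ j, F i j t) := by
        rw [Finset.mul_sum]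
        rw [integral_finset_sum _ (fun i _ => integrable_finset_sum _ (fun j _ => hFint i j))]
        refine Finset.sum_congr rfl fun i _ => ?_
        rw [Finset.mul_sum, integral_finset_sum _ (fun j _ => hFint i j)]
        exact Finset.sum_congr rfl fun j _ => hCK i j
      rw [hsum]
      refine setIntegral_nonneg measurableSet_Ioi fun t ht => ?_
      have hpt : ∀ i j, F i j t
          = (Real.exp (-(t * d i j)) - Real.exp (-(t * a i)) - Real.exp (-(t * a j)) + 1)
            * u i * u j * t ^ (-1 - α) := by
        intro i j
        simp only [hF]
        ring
      have hlam := lambda_kernel_psd m U hU u (le_of_lt ht)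
      calc (0:ℝ) ≤ (∑ i, ∑ j,
          (Real.exp (-(t * d i j)) - Real.exp (-(t * a i)) - Real.exp (-(t * a j)) + 1)
            * u i * u j) * t ^ (-1 - α) :=
            mul_nonneg hlam (Real.rpow_nonneg (le_of_lt ht) _)
      _ = ∑ i, ∑ j, F i j t := by
          rw [Finset.sum_mul]
          refine Finset.sum_congr rfl fun i _ => ?_
          rw [Finset.sum_mul]
          exact Finset.sum_congr rfl fun j _ => (hpt i j).symm
    nlinarith [hmain, hCpos]
end

section
/- Let H be a real inner product space, λ > 0, and 0 < α ≤ 1. Then the kernel (f,g) ↦ exp(−λ‖f−g‖^{2α}) is positive semidefinite on H: for any f₁,…,fₙ ∈ H and u₁,…,uₙ ∈ ℝ, ∑_{i,j} exp(−λ‖fᵢ−fⱼ‖^{2α}) uᵢ uⱼ ≥ 0. -/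
open MeasureTheory Set Real Finset
open scoped RealInnerProductSpace

lemma pow_gram_nonneg {n m : ℕ} (A : Fin m → Fin n → ℝ) (v : Fin n → ℝ) (k : ℕ) :
    0 ≤ ∑ i, ∑ j, v i * v j * (∑ p, A p i * A p j) ^ k := by
  have hexp : ∀ i j : Fin n, (∑ p, A p i * A p j) ^ k
      = ∑ P : Fin k → Fin m, (∏ l, A (P l) i) * (∏ l, A (P l) j) := by
    intro i j
    calc (∑ p, A p i * A p j) ^ k = ∏ _l : Fin k, ∑ p, A p i * A p j := by
          rw [Finset.prod_const, Finset.card_univ, Fintype.card_fin]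
      _ = ∑ P ∈ Fintype.piFinset (fun _ : Fin k => (Finset.univ : Finset (Fin m))),
            ∏ l, A (P l) i * A (P l) j := Finset.prod_univ_sum _ _
      _ = ∑ P : Fin k → Fin m, (∏ l, A (P l) i) * (∏ l, A (P l) j) := by
          rw [Fintype.piFinset_univ]
          exact Finset.sum_congr rfl fun P _ => Finset.prod_mul_distrib
  have hsq : ∀ P : Fin k → Fin m, (∑ i, v i * ∏ l, A (P l) i) ^ 2
      = ∑ i, ∑ j, v i * v j * ((∏ l, A (P l) i) * (∏ l, A (P l) j)) := by
    intro P
    rw [sq, Finset.sum_mul_sum]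
    exact Finset.sum_congr rfl fun i _ => Finset.sum_congr rfl fun j _ => by ring
  calc (0:ℝ) ≤ ∑ P : Fin k → Fin m, (∑ i, v i * ∏ l, A (P l) i) ^ 2 :=
        Finset.sum_nonneg fun P _ => sq_nonneg _
    _ = ∑ i, ∑ j, v i * v j * (∑ p, A p i * A p j) ^ k := by
        simp only [hsq, hexp, Finset.mul_sum]
        rw [Finset.sum_comm]
        exact Finset.sum_congr rfl fun i _ => Finset.sum_comm

lemma exp_psd {n : ℕ} {M : Matrix (Fin n) (Fin n) ℝ} (hM : M.PosSemidef) (v : Fin n → ℝ) :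
    0 ≤ ∑ i, ∑ j, v i * v j * Real.exp (M i j) := by
  obtain ⟨B, hB⟩ : ∃ B : Matrix (Fin n) (Fin n) ℝ, M = B.conjTranspose * B := by
    open scoped MatrixOrder in exact CStarAlgebra.nonneg_iff_eq_star_mul_self.mp hM.nonneg
  have hMij : ∀ i j, M i j = ∑ p, B p i * B p j := by
    intro i j
    rw [hB]
    simp [Matrix.mul_apply, Matrix.conjTranspose_apply]
  have hexp : ∀ i j, Real.exp (M i j) = ∑' k : ℕ, (M i j) ^ k / k.factorial := by
    intro i j
    rw [Real.exp_eq_exp_ℝ, NormedSpace.exp_eq_tsum_div]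
  have hsummable : ∀ i j : Fin n, Summable (fun k : ℕ => v i * v j * ((M i j) ^ k / k.factorial)) :=
    fun i j => (Real.summable_pow_div_factorial (M i j)).mul_left _
  calc (0:ℝ) ≤ ∑' k : ℕ, ∑ i, ∑ j, v i * v j * ((M i j) ^ k / k.factorial) := by
        refine tsum_nonneg fun k => ?_
        have := pow_gram_nonneg B v k
        simp only [← hMij] at this
        calc (0:ℝ) ≤ (k.factorial : ℝ)⁻¹ * ∑ i, ∑ j, v i * v j * (M i j) ^ k := by positivity
          _ = ∑ i, ∑ j, v i * v j * ((M i j) ^ k / k.factorial) := by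
              rw [Finset.mul_sum]
              exact Finset.sum_congr rfl fun i _ => by rw [Finset.mul_sum]; exact Finset.sum_congr rfl fun j _ => by ring
    _ = ∑ i, ∑ j, v i * v j * Real.exp (M i j) := by
        rw [Summable.tsum_finsetSum (fun i _ => summable_sum fun j _ => hsummable i j)]
        refine Finset.sum_congr rfl fun i _ => ?_
        rw [Summable.tsum_finsetSum (fun j _ => hsummable i j)]
        refine Finset.sum_congr rfl fun j _ => ?_
        rw [hexp, ← tsum_mul_left]

lemma gram_psd {H : Type*} [NormedAddCommGroup H] [InnerProductSpace ℝ H]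
    {n : ℕ} (f : Fin n → H) (c : ℝ) (hc : 0 ≤ c) :
    Matrix.PosSemidef (Matrix.of fun i j => c * ⟪f i, f j⟫) := by
  refine Matrix.posSemidef_iff_dotProduct_mulVec.mpr ⟨?_, ?_⟩
  · ext i j
    simp [Matrix.conjTranspose_apply, real_inner_comm]
  · intro x
    simp only [dotProduct, Matrix.mulVec, Matrix.of_apply, RCLike.re_to_real,
      Pi.star_apply, star_trivial, dotProduct]
    have : ∑ i, x i * ∑ j, c * ⟪f i, f j⟫ * x j = c * ⟪∑ i, x i • f i, ∑ j, x j • f j⟫ := by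
      simp only [sum_inner, inner_sum, real_inner_smul_left, real_inner_smul_right, Finset.mul_sum]
      exact Finset.sum_congr rfl fun i _ => Finset.sum_congr rfl fun j _ => by rw [real_inner_comm (f j) (f i)]; ring
    rw [this]
    exact mul_nonneg hc real_inner_self_nonneg

lemma gaussian_psd {H : Type*} [NormedAddCommGroup H] [InnerProductSpace ℝ H]
    {n : ℕ} (f : Fin n → H) (v : Fin n → ℝ) (t : ℝ) (ht : 0 ≤ t) :
    0 ≤ ∑ i, ∑ j, v i * v j * Real.exp (-(t * ‖f i - f j‖ ^ 2)) := by
  have key := exp_psd (gram_psd f (2 * t) (by linarith)) (fun i => v i * Real.exp (-(t * ‖f i‖ ^ 2)))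
  calc (0:ℝ) ≤ _ := key
    _ = ∑ i, ∑ j, v i * v j * Real.exp (-(t * ‖f i - f j‖ ^ 2)) := by
      refine Finset.sum_congr rfl fun i _ => Finset.sum_congr rfl fun j _ => ?_
      have : ‖f i - f j‖ ^ 2 = ‖f i‖ ^ 2 - 2 * ⟪f i, f j⟫ + ‖f j‖ ^ 2 := by
        rw [@norm_sub_sq_real]
      rw [this, Matrix.of_apply]
      rw [show -(t * (‖f i‖ ^ 2 - 2 * ⟪f i, f j⟫ + ‖f j‖ ^ 2))
          = -(t * ‖f i‖ ^ 2) + 2 * t * ⟪f i, f j⟫ + -(t * ‖f j‖ ^ 2) by ring]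
      rw [Real.exp_add, Real.exp_add]
      ring

lemma contOn (α r : ℝ) : ContinuousOn (fun t : ℝ => (1 - Real.exp (-(r*t))) * t ^ (-1-α)) (Ioi 0) := by
  apply ContinuousOn.mul
  · exact (continuous_const.sub ((Real.continuous_exp.comp (continuous_const.mul continuous_id).neg))).continuousOn
  · intro t ht
    exact (Real.continuousAt_rpow_const t _ (Or.inl (ne_of_gt ht))).continuousWithinAt

lemma hb (α r : ℝ) (hr : 0 ≤ r) : ∀ t : ℝ, 0 < t →
    0 ≤ (1 - Real.exp (-(r*t))) * t ^ (-1-α)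
    ∧ (1 - Real.exp (-(r*t))) * t ^ (-1-α) ≤ 1 * t ^ (-1-α)
    ∧ (1 - Real.exp (-(r*t))) * t ^ (-1-α) ≤ (r * t) * t ^ (-1-α) := by
  intro t ht
  have hp : (0:ℝ) ≤ t ^ (-1-α) := Real.rpow_nonneg ht.le _
  have h1 : 1 - Real.exp (-(r*t)) ≤ 1 := by have := Real.exp_pos (-(r*t)); linarith
  have h2 : 1 - Real.exp (-(r*t)) ≤ r * t := by have := Real.add_one_le_exp (-(r*t)); linarith
  have h0 : 0 ≤ 1 - Real.exp (-(r*t)) := by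
    have : Real.exp (-(r*t)) ≤ 1 := Real.exp_le_one_iff.mpr (by simp; positivity)
    linarith
  exact ⟨mul_nonneg h0 hp, mul_le_mul_of_nonneg_right h1 hp, mul_le_mul_of_nonneg_right h2 hp⟩

lemma integrable_h (α : ℝ) (hα0 : 0 < α) (hα1 : α < 1) (r : ℝ) (hr : 0 ≤ r) :
    IntegrableOn (fun t : ℝ => (1 - Real.exp (-(r*t))) * t ^ (-1-α)) (Ioi 0) := by
  rw [← Set.Ioc_union_Ioi_eq_Ioi (zero_le_one' ℝ)]
  apply MeasureTheory.IntegrableOn.union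
  · have hint : IntegrableOn (fun t : ℝ => r * t ^ (-α)) (Ioc 0 1) := by
      apply Integrable.const_mul
      have := intervalIntegral.intervalIntegrable_rpow' (a := 0) (b := 1) (r := -α) (by linarith)
      rwa [intervalIntegrable_iff, uIoc_of_le (zero_le_one' ℝ)] at this
    refine MeasureTheory.Integrable.mono hint (((contOn α r).aestronglyMeasurable measurableSet_Ioi).mono_set
        Set.Ioc_subset_Ioi_self) ?_
    filter_upwards [ae_restrict_mem measurableSet_Ioc] with t ht
    obtain ⟨h0, -, h2⟩ := hb α r hr t ht.1
    rw [Real.norm_of_nonneg h0,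
      Real.norm_of_nonneg (mul_nonneg hr (Real.rpow_nonneg ht.1.le _))]
    calc (1 - Real.exp (-(r*t))) * t ^ (-1-α) ≤ (r * t) * t ^ (-1-α) := h2
      _ = r * (t * t ^ (-1-α)) := by ring
      _ = r * t ^ (-α) := by
          rw [← Real.rpow_one_add' ht.1.le
            (by rw [show (1:ℝ) + (-1-α) = -α by ring]; exact ne_of_lt (by linarith))]
          rw [show (1:ℝ) + (-1-α) = -α by ring]
  · have hint : IntegrableOn (fun t : ℝ => t ^ (-1-α)) (Ioi 1) :=
      integrableOn_Ioi_rpow_of_lt (by linarith) one_pos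
    refine MeasureTheory.Integrable.mono hint (((contOn α r).aestronglyMeasurable measurableSet_Ioi).mono_set
        (Set.Ioi_subset_Ioi zero_le_one)) ?_
    filter_upwards [ae_restrict_mem measurableSet_Ioi] with t ht
    have ht0 : (0:ℝ) < t := lt_trans one_pos ht
    obtain ⟨h0, h1, -⟩ := hb α r hr t ht0
    rw [Real.norm_of_nonneg h0, Real.norm_of_nonneg (Real.rpow_nonneg ht0.le _)]
    linarith

noncomputable def Cα (α : ℝ) : ℝ := ∫ t in Ioi (0:ℝ), (1 - Real.exp (-t)) * t ^ (-1-α)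

lemma Cα_pos (α : ℝ) (hα0 : 0 < α) (hα1 : α < 1) : 0 < Cα α := by
  rw [Cα]
  have hint : IntegrableOn (fun t : ℝ => (1 - Real.exp (-t)) * t ^ (-1-α)) (Ioi 0) := by
    have := integrable_h α hα0 hα1 1 zero_le_one
    simpa using this
  rw [setIntegral_pos_iff_support_of_nonneg_ae ?h1 hint]
  case h1 =>
    filter_upwards [ae_restrict_mem measurableSet_Ioi] with t ht
    have h1 : Real.exp (-t) < 1 := by
      rw [Real.exp_lt_one_iff]
      have : (0:ℝ) < t := ht
      linarith
    exact mul_nonneg (by linarith) (Real.rpow_nonneg (le_of_lt (show (0:ℝ) < t from ht)) _)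
  · have hsub : Set.Ioi (0:ℝ) ⊆ Function.support (fun t : ℝ => (1 - Real.exp (-t)) * t ^ (-1-α)) := by
      intro t ht
      have h1 : Real.exp (-t) < 1 := by
        rw [Real.exp_lt_one_iff]
        have : (0:ℝ) < t := ht
        linarith
      have h2 : (0:ℝ) < t ^ (-1-α) := Real.rpow_pos_of_pos ht _
      exact ne_of_gt (mul_pos (by linarith) h2)
    rw [inter_eq_self_of_subset_right hsub, Real.volume_Ioi]
    exact ENNReal.zero_lt_top

lemma scaled_integral (α : ℝ) (hα0 : 0 < α) (hα1 : α < 1) (r : ℝ) (hr : 0 ≤ r) :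
    r ^ α * Cα α = ∫ t in Ioi (0:ℝ), (1 - Real.exp (-(r*t))) * t ^ (-1-α) := by
  rcases eq_or_lt_of_le hr with h | h
  · simp [← h, Real.zero_rpow (ne_of_gt hα0)]
  · have key := integral_comp_mul_left_Ioi (fun s => (1 - Real.exp (-s)) * s ^ (-1-α)) 0 h
    simp only [mul_zero, smul_eq_mul] at key
    have lhs_eq : ∫ t in Ioi (0:ℝ), (1 - Real.exp (-(r*t))) * (r*t) ^ (-1-α)
        = r ^ (-1-α) * ∫ t in Ioi (0:ℝ), (1 - Real.exp (-(r*t))) * t ^ (-1-α) := by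
      rw [← integral_const_mul]
      refine setIntegral_congr_fun measurableSet_Ioi fun t ht => ?_
      rw [Real.mul_rpow h.le (le_of_lt ht)]
      ring
    rw [lhs_eq] at key
    have hrne : r ^ (-1-α) ≠ 0 := ne_of_gt (Real.rpow_pos_of_pos h _)
    have heq : ∫ t in Ioi (0:ℝ), (1 - Real.exp (-(r*t))) * t ^ (-1-α)
        = (r ^ (-1-α))⁻¹ * (r⁻¹ * Cα α) := by
      rw [← Cα] at key
      rw [← key, inv_mul_cancel_left₀ hrne]
    have hfinal : (r ^ (-1-α))⁻¹ * r⁻¹ = r ^ α := by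
      rw [show (-1-α : ℝ) = -(1+α) by ring, Real.rpow_neg h.le, inv_inv,
        ← Real.rpow_neg_one r, ← Real.rpow_add h, show (1+α+(-1) : ℝ) = α by ring]
    rw [heq, ← mul_assoc, hfinal]


lemma nd {H : Type*} [NormedAddCommGroup H] [InnerProductSpace ℝ H]
    {n : ℕ} (f : Fin n → H) (v : Fin n → ℝ) (hv : ∑ i, v i = 0)
    (α : ℝ) (hα0 : 0 < α) (hα1 : α ≤ 1) :
    ∑ i, ∑ j, v i * v j * ‖f i - f j‖ ^ (2*α) ≤ 0 := by
  rcases eq_or_lt_of_le hα1 with h1 | h1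
  · -- α = 1
    subst h1
    have hG : ∑ i, ∑ j, v i * v j * ⟪f i, f j⟫ = ⟪∑ i, v i • f i, ∑ j, v j • f j⟫ := by
      simp only [sum_inner, inner_sum, real_inner_smul_left, real_inner_smul_right]
      exact Finset.sum_congr rfl fun i _ => Finset.sum_congr rfl fun j _ => by
        rw [real_inner_comm (f j) (f i)]; ring
    have step : ∀ i, ∑ j, v i * v j * ‖f i - f j‖ ^ ((2:ℝ)*1)
        = v i * ‖f i‖^2 * (∑ j, v j) + v i * (∑ j, v j * ‖f j‖^2)
          - 2 * (v i * ∑ j, v j * ⟪f i, f j⟫) := by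
      intro i
      have hterm : ∀ j, v i * v j * ‖f i - f j‖ ^ ((2:ℝ)*1)
          = v i * ‖f i‖^2 * v j + v i * (v j * ‖f j‖^2) - 2 * (v i * (v j * ⟪f i, f j⟫)) := by
        intro j
        rw [show ((2:ℝ)*1) = ((2:ℕ):ℝ) by norm_num, Real.rpow_natCast, @norm_sub_sq_real]
        ring
      simp only [hterm, Finset.sum_sub_distrib, Finset.sum_add_distrib, ← Finset.mul_sum]
    have hsq : (0:ℝ) ≤ ⟪∑ i, v i • f i, ∑ j, v j • f j⟫ := real_inner_self_nonneg
    calc ∑ i, ∑ j, v i * v j * ‖f i - f j‖ ^ ((2:ℝ)*1)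
        = -2 * ∑ i, ∑ j, v i * v j * ⟪f i, f j⟫ := by
          simp only [step, hv, mul_zero, zero_add, Finset.sum_sub_distrib, ← Finset.sum_mul,
            ← Finset.mul_sum, hv, zero_mul]
          rw [zero_sub, neg_eq_iff_eq_neg, Finset.mul_sum]
          rw [show -(-2 * ∑ i, ∑ j, v i * v j * ⟪f i, f j⟫)
              = ∑ i, 2 * ∑ j, v i * v j * ⟪f i, f j⟫ by rw [← Finset.mul_sum]; ring]
          refine Finset.sum_congr rfl fun i _ => ?_
          rw [Finset.mul_sum, Finset.mul_sum, Finset.mul_sum]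
          exact Finset.sum_congr rfl fun j _ => by ring
      _ ≤ 0 := by rw [hG]; linarith
  · -- α < 1
    have hC := Cα_pos α hα0 h1
    have hint : ∀ i j : Fin n, Integrable
        (fun t : ℝ => v i * v j * ((1 - Real.exp (-(‖f i - f j‖^2 * t))) * t ^ (-1-α)))
        (volume.restrict (Ioi 0)) :=
      fun i j => (integrable_h α hα0 h1 _ (sq_nonneg _)).const_mul _
    have key : Cα α * (∑ i, ∑ j, v i * v j * ‖f i - f j‖ ^ (2*α)) ≤ 0 := by
      have hrw : ∀ i j, Cα α * (v i * v j * ‖f i - f j‖ ^ (2*α))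
          = ∫ t in Ioi (0:ℝ), v i * v j * ((1 - Real.exp (-(‖f i - f j‖^2 * t))) * t ^ (-1-α)) := by
        intro i j
        rw [integral_const_mul, ← scaled_integral α hα0 h1 _ (sq_nonneg _)]
        rw [show ‖f i - f j‖ ^ (2*α) = (‖f i - f j‖^2) ^ α by
          rw [← Real.rpow_natCast ‖f i - f j‖ 2, ← Real.rpow_mul (norm_nonneg _)]
          norm_num]
        ring
      calc Cα α * (∑ i, ∑ j, v i * v j * ‖f i - f j‖ ^ (2*α))
          = ∑ i, ∑ j, Cα α * (v i * v j * ‖f i - f j‖ ^ (2*α)) := by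
            rw [Finset.mul_sum]; exact Finset.sum_congr rfl fun i _ => Finset.mul_sum _ _ _
        _ = ∫ t in Ioi (0:ℝ), ∑ i, ∑ j, v i * v j * ((1 - Real.exp (-(‖f i - f j‖^2 * t))) * t ^ (-1-α)) := by
            simp only [hrw]
            rw [integral_finset_sum _ (fun i _ => integrable_finset_sum _ fun j _ => hint i j)]
            exact Finset.sum_congr rfl fun i _ => (integral_finset_sum _ fun j _ => hint i j).symm
        _ ≤ 0 := by
            refine setIntegral_nonpos measurableSet_Ioi fun t ht => ?_
            have hgauss := gaussian_psd f v t (le_of_lt ht)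
            have hp : (0:ℝ) ≤ t ^ (-1-α) := Real.rpow_nonneg (le_of_lt ht) _
            have h2 : ((∑ i, v i)^2 - ∑ i, ∑ j, v i * v j * Real.exp (-(t * ‖f i - f j‖^2))) * t ^ (-1-α)
                = ∑ i, ∑ j, (v i * v j * t ^ (-1-α)
                    - v i * v j * Real.exp (-(t * ‖f i - f j‖^2)) * t ^ (-1-α)) := by
              rw [sq, Finset.sum_mul_sum, sub_mul, Finset.sum_mul, Finset.sum_mul,
                ← Finset.sum_sub_distrib]
              refine Finset.sum_congr rfl fun i _ => ?_
              rw [Finset.sum_mul, Finset.sum_mul, ← Finset.sum_sub_distrib]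
            have expand : ∑ i, ∑ j, v i * v j * ((1 - Real.exp (-(‖f i - f j‖^2 * t))) * t ^ (-1-α))
                = ((∑ i, v i)^2 - ∑ i, ∑ j, v i * v j * Real.exp (-(t * ‖f i - f j‖^2))) * t ^ (-1-α) := by
              rw [h2]
              exact Finset.sum_congr rfl fun i _ => Finset.sum_congr rfl fun j _ => by
                rw [show -(‖f i - f j‖^2 * t) = -(t * ‖f i - f j‖^2) by ring]; ring
            rw [expand, hv]
            nlinarith
    by_contra hT
    push_neg at hT
    nlinarith [mul_pos hC hT]

lemma key_bound {H : Type*} [NormedAddCommGroup H] [InnerProductSpace ℝ H]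
    {n : ℕ} (f : Fin n → H) (u : Fin n → ℝ)
    (α : ℝ) (hα0 : 0 < α) (hα1 : α ≤ 1) :
    ∑ i, ∑ j, u i * u j * ‖f i - f j‖ ^ (2*α)
      ≤ 2 * (∑ i, u i) * (∑ i, u i * ‖f i‖ ^ (2*α)) := by
  have hsum : ∑ i : Fin (n+1), (Fin.snoc u (-(∑ i, u i)) : Fin (n+1) → ℝ) i = 0 := by
    rw [Fin.sum_univ_castSucc]
    simp [Fin.snoc_castSucc, Fin.snoc_last]
  have h := nd (Fin.snoc f 0) (Fin.snoc u (-(∑ i, u i))) hsum α hα0 hα1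
  have hnorm : ‖(0:H)‖ ^ (2*α) = 0 := by
    rw [norm_zero, Real.zero_rpow (by positivity)]
  rw [Fin.sum_univ_castSucc] at h
  simp only [Fin.sum_univ_castSucc (n := n), Fin.snoc_castSucc, Fin.snoc_last,
    sub_zero, zero_sub, norm_neg] at h
  rw [hnorm] at h
  have h1 : ∑ x : Fin n, (∑ y : Fin n, u x * u y * ‖f x - f y‖ ^ (2*α)
        + u x * -(∑ i, u i) * ‖f x‖ ^ (2*α))
      = (∑ x, ∑ y, u x * u y * ‖f x - f y‖ ^ (2*α))
        + (-(∑ i, u i)) * ∑ x, u x * ‖f x‖ ^ (2*α) := by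
    rw [Finset.sum_add_distrib, Finset.mul_sum]
    congr 1
    exact Finset.sum_congr rfl fun x _ => by ring
  have h2 : ∑ x : Fin n, -(∑ i, u i) * u x * ‖f x‖ ^ (2*α)
      = (-(∑ i, u i)) * ∑ x, u x * ‖f x‖ ^ (2*α) := by
    rw [Finset.mul_sum]
    exact Finset.sum_congr rfl fun x _ => by ring
  rw [h1, h2] at h
  linarith

theorem exp_neg_norm_rpow_posSemidef
    {H : Type*} [NormedAddCommGroup H] [InnerProductSpace ℝ H]
    (lam : ℝ) (hlam : 0 < lam)
    (α : ℝ) (hα0 : 0 < α) (hα1 : α ≤ 1)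
    (n : ℕ) (f : Fin n → H) (u : Fin n → ℝ) :
    0 ≤ ∑ i, ∑ j, Real.exp (-lam * ‖f i - f j‖ ^ (2 * α)) * u i * u j := by
  set a : Fin n → ℝ := fun i => ‖f i‖ ^ (2*α) with ha
  set K : Matrix (Fin n) (Fin n) ℝ :=
    Matrix.of (fun i j => lam * (a i + a j - ‖f i - f j‖ ^ (2*α))) with hK
  have hKpsd : K.PosSemidef := by
    refine Matrix.posSemidef_iff_dotProduct_mulVec.mpr ⟨?_, ?_⟩
    · ext i j
      simp only [hK, Matrix.conjTranspose_apply, Matrix.of_apply, star_trivial,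
        norm_sub_rev (f j) (f i)]
      ring
    · intro x
      simp only [dotProduct, Matrix.mulVec, Matrix.of_apply, RCLike.re_to_real,
        Pi.star_apply, star_trivial, hK]
      have hb := key_bound f x α hα0 hα1
      have expand : ∑ i, x i * ∑ j, lam * (a i + a j - ‖f i - f j‖ ^ (2*α)) * x j
          = lam * (2 * (∑ i, x i) * (∑ i, x i * a i)
              - ∑ i, ∑ j, x i * x j * ‖f i - f j‖ ^ (2*α)) := by
        have e0 : ∑ i, x i * ∑ j, lam * (a i + a j - ‖f i - f j‖ ^ (2*α)) * x j
            = ∑ i, ∑ j, (lam * (x i * x j * a i) + lam * (x i * x j * a j)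
                - lam * (x i * x j * ‖f i - f j‖ ^ (2*α))) := by
          refine Finset.sum_congr rfl fun i _ => ?_
          rw [Finset.mul_sum]
          exact Finset.sum_congr rfl fun j _ => by ring
        have eB : ∑ i, ∑ j, lam * (x i * x j * a j)
            = lam * ((∑ i, x i) * (∑ i, x i * a i)) := by
          rw [Finset.sum_mul_sum, Finset.mul_sum]
          refine Finset.sum_congr rfl fun i _ => ?_
          rw [Finset.mul_sum]
          exact Finset.sum_congr rfl fun j _ => by ring
        have eA : ∑ i, ∑ j, lam * (x i * x j * a i)
            = lam * ((∑ i, x i) * (∑ i, x i * a i)) := by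
          rw [Finset.sum_comm, ← eB]
          exact Finset.sum_congr rfl fun j _ => Finset.sum_congr rfl fun i _ => by ring
        have eC : ∑ i, ∑ j, lam * (x i * x j * ‖f i - f j‖ ^ (2*α))
            = lam * ∑ i, ∑ j, x i * x j * ‖f i - f j‖ ^ (2*α) := by
          rw [Finset.mul_sum]
          exact Finset.sum_congr rfl fun i _ => by rw [Finset.mul_sum]
        rw [e0]
        simp only [Finset.sum_add_distrib, Finset.sum_sub_distrib]
        rw [eA, eB, eC]
        ring
      rw [expand]
      have : 0 ≤ 2 * (∑ i, x i) * (∑ i, x i * a i)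
          - ∑ i, ∑ j, x i * x j * ‖f i - f j‖ ^ (2*α) := by linarith
      positivity
  have key := exp_psd hKpsd (fun i => u i * Real.exp (-lam * a i))
  calc (0:ℝ) ≤ _ := key
    _ = ∑ i, ∑ j, Real.exp (-lam * ‖f i - f j‖ ^ (2 * α)) * u i * u j := by
      refine Finset.sum_congr rfl fun i _ => Finset.sum_congr rfl fun j _ => ?_
      rw [hK, Matrix.of_apply,
        show lam * (a i + a j - ‖f i - f j‖ ^ (2*α))
          = (-lam * ‖f i - f j‖ ^ (2*α)) - (-lam * a i) - (-lam * a j) by ring,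
        Real.exp_sub, Real.exp_sub]
      field_simp [Real.exp_ne_zero]
end
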